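/- For every integer n ≥ 1, p_{2n,μ}(1,-1) = (2μ/n)·Σ_{k=0}^{n-1} C_μ(2n, 2k+1), i.e. the alternating sum of the μ-deformed binomial coefficients of upper index 2n equals 2μ/n times the sum of the odd-indexed ones. -/

import Mathlib

open Finset

/-- The μ-deformed factorial function γ_μ. -/
noncomputable def gammaMu (μ : ℝ) : ℕ → ℝ
  | 0 => 1
  | n + 1 => ((n + 1 : ℝ) + 2 * μ * (if Odd (n + 1) then 1 else 0)) * gammaMu μ n

/-- The μ-deformed binomial coefficient C_μ(n,k), zero outside 0 ≤ k ≤ n. -/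
noncomputable def binomMu (μ : ℝ) (n : ℕ) (k : ℤ) : ℝ :=
  if 0 ≤ k ∧ k ≤ (n : ℤ) then gammaMu μ n / (gammaMu μ (n - k.toNat) * gammaMu μ k.toNat) else 0

/-- The n-th μ-deformed binomial polynomial p_{n,μ}(x,y). -/
noncomputable def pMu (μ : ℝ) (n : ℕ) (x y : ℂ) : ℂ :=
  ∑ k ∈ Finset.range (n + 1), (binomMu μ n k : ℂ) * x ^ k * y ^ (n - k)

/-- The μ-deformed exponential function. -/
noncomputable def expMu (μ : ℝ) (z : ℂ) : ℂ :=
  ∑' n : ℕ, z ^ n / (gammaMu μ n : ℂ)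

/-- The Bessel function of the first kind of order ν, for positive real argument. -/
noncomputable def besselJ (ν x : ℝ) : ℝ :=
  ∑' m : ℕ, ((-1) ^ m / (Nat.factorial m * Real.Gamma (ν + m + 1))) * (x / 2) ^ ((2 * m : ℝ) + ν)

lemma gammaMu_succ (μ : ℝ) (n : ℕ) :
    gammaMu μ (n+1) = ((n + 1 : ℝ) + 2 * μ * (if Odd (n + 1) then 1 else 0)) * gammaMu μ n := rfl

lemma gammaMu_pos (μ : ℝ) (hμ : -(1/2:ℝ) < μ) : ∀ n, 0 < gammaMu μ n
  | 0 => by simp [gammaMu]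
  | n+1 => by
    have h := gammaMu_pos μ hμ n
    rw [gammaMu_succ]
    apply mul_pos _ h
    have hn : (0:ℝ) ≤ (n:ℝ) := Nat.cast_nonneg n
    split <;> nlinarith

lemma gamma_even_succ (μ : ℝ) (j : ℕ) :
    gammaMu μ (2*j+2) = (2*(j:ℝ)+2) * gammaMu μ (2*j+1) := by
  rw [show 2*j+2 = (2*j+1)+1 by ring, gammaMu_succ]
  have : ¬ Odd (2*j+1+1) := by simp only [Nat.odd_iff]; omega
  rw [if_neg this]
  push_cast; ring

lemma gamma_odd_succ (μ : ℝ) (j : ℕ) :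
    gammaMu μ (2*j+1) = (2*(j:ℝ)+1+2*μ) * gammaMu μ (2*j) := by
  rw [gammaMu_succ]
  have : Odd (2*j+1) := by simp only [Nat.odd_iff]; omega
  rw [if_pos this]
  push_cast; ring

lemma binomMu_nat (μ : ℝ) (a b : ℕ) :
    binomMu μ (a+b) (b:ℤ) = gammaMu μ (a+b) / (gammaMu μ a * gammaMu μ b) := by
  unfold binomMu
  rw [if_pos ⟨Int.natCast_nonneg b, by exact_mod_cast Nat.le_add_left b a⟩]
  simp [Int.toNat_natCast]

lemma binomMu_zero (μ : ℝ) (n : ℕ) (k : ℤ) (h : ¬ (0 ≤ k ∧ k ≤ (n:ℤ))) :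
    binomMu μ n k = 0 := by
  unfold binomMu; rw [if_neg h]

lemma binomMu_eq (μ : ℝ) (n : ℕ) (k : ℤ) (a b : ℕ) (h1 : k = (b:ℤ)) (h2 : n = a + b) :
    binomMu μ n k = gammaMu μ n / (gammaMu μ a * gammaMu μ b) := by
  subst h1; subst h2; exact binomMu_nat μ a b


lemma gammaMu_zero (μ : ℝ) : gammaMu μ 0 = 1 := rfl

lemma key (μ : ℝ) (hμ : -(1/2:ℝ) < μ) (n k : ℕ) (hn : 1 ≤ n) (hk : k ≤ n) :
    (2*(n:ℝ)) * binomMu μ (2*n) (2*(k:ℤ)) =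
      (2*μ + 2*((n:ℝ)-(k:ℝ)) + 1) * binomMu μ (2*n) (2*(k:ℤ)-1)
      + (2*μ + 2*(k:ℝ) + 1) * binomMu μ (2*n) (2*(k:ℤ)+1) := by
  have hp := gammaMu_pos μ hμ
  obtain ⟨m, rfl⟩ : ∃ m, n = m + 1 := ⟨n-1, by omega⟩
  rcases Nat.eq_zero_or_pos k with rfl | hkpos
  · rw [binomMu_eq μ (2*(m+1)) (2*((0:ℕ):ℤ)) (2*m+2) 0 (by push_cast <;> ring) (by ring),
        binomMu_zero μ (2*(m+1)) (2*((0:ℕ):ℤ)-1) (by omega),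
        binomMu_eq μ (2*(m+1)) (2*((0:ℕ):ℤ)+1) (2*m+1) 1 (by push_cast <;> ring) (by ring),
        show 2*(m+1) = 2*m+2 by ring, gamma_even_succ μ m,
        show gammaMu μ 1 = 1+2*μ from by norm_num [gammaMu], gammaMu_zero]
    have h1 : gammaMu μ (2*m+1) ≠ 0 := ne_of_gt (hp _)
    have h2 : (2*(m:ℝ)+2) ≠ 0 := by positivity
    have h3 : (1+2*μ) ≠ (0:ℝ) := by nlinarith
    push_cast
    field_simp
    ring
  · rcases eq_or_lt_of_le hk with rfl | hklt
    · rw [binomMu_eq μ (2*(m+1)) (2*((m+1:ℕ):ℤ)) 0 (2*m+2) (by push_cast <;> ring) (by ring),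
          binomMu_zero μ (2*(m+1)) (2*((m+1:ℕ):ℤ)+1) (by omega),
          binomMu_eq μ (2*(m+1)) (2*((m+1:ℕ):ℤ)-1) 1 (2*m+1) (by push_cast <;> ring) (by ring),
          show 2*(m+1) = 2*m+2 by ring, gamma_even_succ μ m,
          show gammaMu μ 1 = 1+2*μ from by norm_num [gammaMu], gammaMu_zero]
      have h1 : gammaMu μ (2*m+1) ≠ 0 := ne_of_gt (hp _)
      have h2 : (2*(m:ℝ)+2) ≠ 0 := by positivity
      have h3 : (1+2*μ) ≠ (0:ℝ) := by nlinarith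
      push_cast
      field_simp
      ring
    · obtain ⟨l, rfl⟩ : ∃ l, k = l + 1 := ⟨k-1, by omega⟩
      obtain ⟨j, rfl⟩ : ∃ j, m = l + 1 + j := ⟨m-l-1, by omega⟩
      rw [binomMu_eq μ (2*(l+1+j+1)) (2*((l+1:ℕ):ℤ)) (2*j+2) (2*l+2) (by push_cast <;> ring) (by ring),
          binomMu_eq μ (2*(l+1+j+1)) (2*((l+1:ℕ):ℤ)-1) (2*j+3) (2*l+1) (by push_cast <;> ring) (by ring),
          binomMu_eq μ (2*(l+1+j+1)) (2*((l+1:ℕ):ℤ)+1) (2*j+1) (2*l+3) (by push_cast <;> ring) (by ring),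
          show 2*j+3 = 2*(j+1)+1 by ring, gamma_odd_succ μ (j+1),
          show 2*(j+1) = 2*j+2 by ring, gamma_even_succ μ j,
          show 2*l+3 = 2*(l+1)+1 by ring, gamma_odd_succ μ (l+1),
          show 2*(l+1) = 2*l+2 by ring, gamma_even_succ μ l]
      have h1 : gammaMu μ (2*j+1) ≠ 0 := ne_of_gt (hp _)
      have h2 : gammaMu μ (2*l+1) ≠ 0 := ne_of_gt (hp _)
      have h3 : (2*(j:ℝ)+2) ≠ 0 := by positivity
      have h4 : (2*(l:ℝ)+2) ≠ 0 := by positivity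
      have h5 : (2*((j:ℝ)+1)+1+2*μ) ≠ 0 := by nlinarith [Nat.cast_nonneg (α := ℝ) j]
      have h6 : (2*((l:ℝ)+1)+1+2*μ) ≠ 0 := by nlinarith [Nat.cast_nonneg (α := ℝ) l]
      push_cast
      field_simp
      ring

lemma sum_even_odd (f : ℕ → ℝ) (n : ℕ) :
    ∑ i ∈ Finset.range (2*n+1), f i
      = (∑ j ∈ Finset.range (n+1), f (2*j)) + ∑ j ∈ Finset.range n, f (2*j+1) := by
  induction n with
  | zero => simp
  | succ n ih =>
    rw [show 2*(n+1)+1 = (2*n+1)+1+1 by ring, Finset.sum_range_succ, Finset.sum_range_succ, ih,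
        Finset.sum_range_succ (fun j => f (2*j)) (n+1), Finset.sum_range_succ (fun j => f (2*j+1)) n,
        show 2*n+1+1 = 2*(n+1) by ring]
    ring

lemma halves (μ : ℝ) (hμ : -(1/2:ℝ) < μ) (n : ℕ) (hn : 1 ≤ n) :
    2*(n:ℝ) * (∑ k ∈ Finset.range (n+1), binomMu μ (2*n) (2*(k:ℤ)))
      = (4*μ + 2*(n:ℝ)) * ∑ k ∈ Finset.range n, binomMu μ (2*n) (2*(k:ℤ)+1) := by
  have hz1 : binomMu μ (2*n) (2*((0:ℕ):ℤ)-1) = 0 := binomMu_zero _ _ _ (by omega)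
  have hz2 : binomMu μ (2*n) (2*((n:ℕ):ℤ)+1) = 0 := binomMu_zero _ _ _ (by omega)
  rw [Finset.mul_sum,
      Finset.sum_congr rfl (fun k hk => key μ hμ n k hn (Nat.lt_succ_iff.mp (Finset.mem_range.mp hk))),
      Finset.sum_add_distrib, Finset.sum_range_succ', Finset.sum_range_succ]
  simp only [hz1, hz2, mul_zero, add_zero, zero_add]
  rw [← Finset.sum_add_distrib, Finset.mul_sum]
  refine Finset.sum_congr rfl fun k hk => ?_
  have h : (2*((k+1:ℕ):ℤ)-1) = 2*(k:ℤ)+1 := by push_cast; ring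
  rw [h]
  push_cast
  ring


theorem pMu_even_alt_sum_eq_odd_sum (μ : ℝ) (hμ : -(1/2 : ℝ) < μ) (n : ℕ) (hn : 1 ≤ n) :
    pMu μ (2 * n) 1 (-1) =
      ((2 * μ / n * ∑ k ∈ Finset.range n, binomMu μ (2 * n) (2 * k + 1) : ℝ) : ℂ) := by
  have hstep1 : pMu μ (2 * n) 1 (-1)
      = ((∑ k ∈ Finset.range (2*n+1), (-1:ℝ)^k * binomMu μ (2*n) (k:ℤ) : ℝ) : ℂ) := by
    unfold pMu
    rw [Complex.ofReal_sum]
    refine Finset.sum_congr rfl fun k hk => ?_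
    have hk2 : k ≤ 2*n := Nat.lt_succ_iff.mp (Finset.mem_range.mp hk)
    rcases Nat.even_or_odd k with he | ho
    · have h2 : Even (2*n-k) := (Nat.even_sub hk2).mpr (by simp [he, even_two_mul])
      rw [he.neg_one_pow, h2.neg_one_pow]
      push_cast
      ring
    · have h2 : Odd (2*n-k) := Nat.Even.sub_odd hk2 (even_two_mul n) ho
      rw [ho.neg_one_pow, h2.neg_one_pow]
      push_cast
      ring
  have hstep2 : ∑ k ∈ Finset.range (2*n+1), (-1:ℝ)^k * binomMu μ (2*n) (k:ℤ)
      = (∑ j ∈ Finset.range (n+1), binomMu μ (2*n) (2*(j:ℤ)))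
        - ∑ j ∈ Finset.range n, binomMu μ (2*n) (2*(j:ℤ)+1) := by
    rw [sum_even_odd (fun k => (-1:ℝ)^k * binomMu μ (2*n) (k:ℤ)) n]
    rw [sub_eq_add_neg, ← Finset.sum_neg_distrib]
    congr 1
    · refine Finset.sum_congr rfl fun j _ => ?_
      have harg : ((2*j:ℕ):ℤ) = 2*(j:ℤ) := by push_cast; ring
      rw [harg, pow_mul]
      norm_num
    · refine Finset.sum_congr rfl fun j _ => ?_
      have harg : ((2*j+1:ℕ):ℤ) = 2*(j:ℤ)+1 := by push_cast; ring
      rw [harg, pow_succ, pow_mul]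
      norm_num
  have hh := halves μ hμ n hn
  have hn' : (n:ℝ) ≠ 0 := Nat.cast_ne_zero.mpr (by omega)
  rw [hstep1]
  congr 1
  rw [hstep2, div_mul_eq_mul_div, eq_div_iff hn']
  linear_combination hh / 2
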